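/- Let O be a (strict) monoidal category and (L, τ) a base algebra in O, i.e. a commutative algebra in the Drinfeld center of O. Define the category Ō_L with the same objects as O, Hom_{Ō_L}(A, B) := Hom_O(A, B ⊗ L), composition of φ : A → B ⊗ L and ψ : B → C ⊗ L given by (id_C ⊗ m_L) ∘ (ψ ⊗ id_L) ∘ φ, and tensor product on morphisms given by φ ⊗̄ ψ := (id ⊗ m_L) ∘ (id ⊗ τ_D ⊗ id) ∘ (φ ⊗ ψ). Then Ō_L is a monoidal category containing O as a monoidal subcategory. -/

import Mathlib

/-!
STATEMENT 4: Let `O` be a monoidal category and `(L, τ)` a base algebra in `O`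
(a commutative algebra in the Drinfeld center).  The dynamical extension `Ō_L` has the
same objects as `O`, morphisms `Hom(A,B) := Hom_O(A, B ⊗ L)`, composition via the
multiplication of `L`, and tensor product of morphisms via the permutations `τ`.
Then `Ō_L` is a monoidal category containing `O` as a monoidal subcategory:
the composition `dcomp` is associative and unital, the tensor product `dtensor` is
unital, functorial (interchange) and associative, and the natural inclusion of `O`
respects identities, composition and tensor products.
-/

open CategoryTheory MonoidalCategory

universe v u

variable {C : Type u} [Category.{v} C] [MonoidalCategory C]

/-- A base algebra in a monoidal category: an algebra `(L, mul, one)` with a family of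
central-structure isomorphisms `τ_A : L ⊗ A ⟶ A ⊗ L`, natural, multiplicative in `A`,
compatible with `mul`, and with `τ`-commutative multiplication. -/
structure BaseAlgebraIn (C : Type u) [Category.{v} C] [MonoidalCategory C] where
  L : C
  mul : L ⊗ L ⟶ L
  one : 𝟙_ C ⟶ L
  mul_assoc : (mul ▷ L) ≫ mul = (α_ L L L).hom ≫ (L ◁ mul) ≫ mul
  one_mul : (one ▷ L) ≫ mul = (λ_ L).hom
  mul_one : (L ◁ one) ≫ mul = (ρ_ L).hom
  τ : ∀ A : C, L ⊗ A ⟶ A ⊗ L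
  τ_iso : ∀ A : C, IsIso (τ A)
  τ_natural : ∀ {A B : C} (ψ : B ⟶ A), (L ◁ ψ) ≫ τ A = τ B ≫ (ψ ▷ L)
  τ_tensor : ∀ A B : C,
    τ (A ⊗ B) = (α_ L A B).inv ≫ (τ A ▷ B) ≫ (α_ A L B).hom ≫ (A ◁ τ B) ≫ (α_ A B L).inv
  τ_mul : ∀ A : C,
    (mul ▷ A) ≫ τ A
      = (α_ L L A).hom ≫ (L ◁ τ A) ≫ (α_ L A L).inv ≫ (τ A ▷ L) ≫ (α_ A L L).hom ≫
          (A ◁ mul)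
  τ_comm : τ L ≫ mul = mul

namespace BaseAlgebraIn

variable (S : BaseAlgebraIn C)

/-- Composition of morphisms in the dynamical extension `Ō_L`. -/
def dcomp {A B D : C} (φ : A ⟶ B ⊗ S.L) (ψ : B ⟶ D ⊗ S.L) : A ⟶ D ⊗ S.L :=
  φ ≫ (ψ ▷ S.L) ≫ (α_ D S.L S.L).hom ≫ (D ◁ S.mul)

/-- The identity morphism of `Ō_L`. -/
def did (A : C) : A ⟶ A ⊗ S.L := (ρ_ A).inv ≫ (A ◁ S.one)

/-- Tensor product of morphisms in the dynamical extension `Ō_L`. -/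
def dtensor {A B A' B' : C} (φ : A ⟶ A' ⊗ S.L) (ψ : B ⟶ B' ⊗ S.L) :
    A ⊗ B ⟶ (A' ⊗ B') ⊗ S.L :=
  (φ ⊗ₘ ψ) ≫ (α_ A' S.L (B' ⊗ S.L)).hom ≫
    (A' ◁ ((α_ S.L B' S.L).inv ≫ ((S.τ B') ▷ S.L) ≫ (α_ B' S.L S.L).hom ≫
      (B' ◁ S.mul))) ≫ (α_ A' B' S.L).inv

/-- The inclusion of `O` into `Ō_L` on morphisms. -/
def incl {A B : C} (f : A ⟶ B) : A ⟶ B ⊗ S.L := f ≫ (ρ_ B).inv ≫ (B ◁ S.one)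

end BaseAlgebraIn

namespace BaseAlgebraIn
variable (S : BaseAlgebraIn C)
lemma id_dcomp {A B : C} (φ : A ⟶ B ⊗ S.L) : S.dcomp (S.did A) φ = φ := by
  simp only [dcomp, did]
  calc ((ρ_ A).inv ≫ (A ◁ S.one)) ≫ (φ ▷ S.L) ≫ (α_ B S.L S.L).hom ≫ (B ◁ S.mul)
      = φ ≫ (ρ_ (B ⊗ S.L)).inv ≫ ((B ⊗ S.L) ◁ S.one) ≫ (α_ B S.L S.L).hom ≫ (B ◁ S.mul) := by
        simp only [Category.assoc]
        rw [whisker_exchange_assoc]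
        simp
    _ = φ ≫ (B ◁ ((ρ_ S.L).inv ≫ (S.L ◁ S.one) ≫ S.mul)) := by monoidal
    _ = φ := by simp only [Category.assoc, S.mul_one]; simp

lemma dcomp_id {A B : C} (φ : A ⟶ B ⊗ S.L) : S.dcomp φ (S.did B) = φ := by
  simp only [dcomp, did]
  have : (((ρ_ B).inv ≫ (B ◁ S.one)) ▷ S.L) ≫ (α_ B S.L S.L).hom ≫ (B ◁ S.mul)
      = B ◁ ((λ_ S.L).inv ≫ (S.one ▷ S.L) ≫ S.mul) := by monoidal
  rw [this, S.one_mul]; simp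

lemma dcomp_tail (E : C) :
    (α_ (E ⊗ S.L) S.L S.L).hom ≫ ((E ⊗ S.L) ◁ S.mul) ≫ (α_ E S.L S.L).hom ≫ (E ◁ S.mul)
      = ((α_ E S.L S.L).hom ▷ S.L) ≫ ((E ◁ S.mul) ▷ S.L) ≫ (α_ E S.L S.L).hom ≫ (E ◁ S.mul) := by
  rw [associator_naturality_right_assoc, associator_naturality_middle_assoc,
    ← MonoidalCategory.whiskerLeft_comp, ← MonoidalCategory.whiskerLeft_comp, S.mul_assoc]
  monoidal

lemma dcomp_assoc {A B D E : C} (φ : A ⟶ B ⊗ S.L) (ψ : B ⟶ D ⊗ S.L) (χ : D ⟶ E ⊗ S.L) :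
    S.dcomp (S.dcomp φ ψ) χ = S.dcomp φ (S.dcomp ψ χ) := by
  simp only [dcomp, comp_whiskerRight, Category.assoc]
  rw [whisker_exchange_assoc, ← associator_naturality_left_assoc, S.dcomp_tail]
lemma recover {A : C} (X : 𝟙_ C ⊗ A ⟶ A ⊗ S.L) :
    X = (ρ_ (𝟙_ C ⊗ A)).inv ≫ ((𝟙_ C ⊗ A : C) ◁ S.one) ≫ (X ▷ S.L) ≫
      (α_ A S.L S.L).hom ≫ (A ◁ S.mul) := by
  rw [whisker_exchange_assoc]
  have h : ((A ⊗ S.L : C) ◁ S.one) ≫ (α_ A S.L S.L).hom ≫ (A ◁ S.mul)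
      = (α_ A S.L (𝟙_ C)).hom ≫ (A ◁ ((S.L ◁ S.one) ≫ S.mul)) := by
    monoidal
  rw [h, S.mul_one]; simp

lemma tau_one_aux {A : C} :
    (((S.one ▷ A) ≫ S.τ A) ▷ S.L) ≫ (α_ A S.L S.L).hom ≫ (A ◁ S.mul)
      = (α_ (𝟙_ C) A S.L).hom ≫ (λ_ (A ⊗ S.L)).hom := by
  haveI := S.τ_iso A
  have e : ((λ_ S.L).hom ▷ A) ≫ S.τ A
      = (α_ (𝟙_ C) S.L A).hom ≫ ((𝟙_ C) ◁ S.τ A) ≫ (α_ (𝟙_ C) A S.L).inv ≫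
          ((((S.one ▷ A) ≫ S.τ A) ▷ S.L) ≫ (α_ A S.L S.L).hom ≫ (A ◁ S.mul)) := by
    calc ((λ_ S.L).hom ▷ A) ≫ S.τ A
        = (((S.one ▷ S.L) ≫ S.mul) ▷ A) ≫ S.τ A := by rw [S.one_mul]
      _ = ((S.one ▷ S.L) ▷ A) ≫ ((S.mul ▷ A) ≫ S.τ A) := by
          simp [comp_whiskerRight]
      _ = ((S.one ▷ S.L) ▷ A) ≫ (α_ S.L S.L A).hom ≫ (S.L ◁ S.τ A) ≫
            (α_ S.L A S.L).inv ≫ (S.τ A ▷ S.L) ≫ (α_ A S.L S.L).hom ≫ (A ◁ S.mul) := by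
          rw [S.τ_mul]
      _ = (α_ (𝟙_ C) S.L A).hom ≫ (S.one ▷ (S.L ⊗ A)) ≫ (S.L ◁ S.τ A) ≫
            (α_ S.L A S.L).inv ≫ (S.τ A ▷ S.L) ≫ (α_ A S.L S.L).hom ≫ (A ◁ S.mul) := by
          rw [associator_naturality_left_assoc]
      _ = (α_ (𝟙_ C) S.L A).hom ≫ ((𝟙_ C) ◁ S.τ A) ≫ (S.one ▷ (A ⊗ S.L)) ≫
            (α_ S.L A S.L).inv ≫ (S.τ A ▷ S.L) ≫ (α_ A S.L S.L).hom ≫ (A ◁ S.mul) := by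
          rw [← whisker_exchange_assoc]
      _ = (α_ (𝟙_ C) S.L A).hom ≫ ((𝟙_ C) ◁ S.τ A) ≫ (α_ (𝟙_ C) A S.L).inv ≫
            ((S.one ▷ A) ▷ S.L) ≫ (S.τ A ▷ S.L) ≫ (α_ A S.L S.L).hom ≫ (A ◁ S.mul) := by
          rw [associator_inv_naturality_left_assoc]
      _ = _ := by simp [comp_whiskerRight]
  have e' : ((λ_ S.L).hom ▷ A) ≫ S.τ A
      = (α_ (𝟙_ C) S.L A).hom ≫ ((𝟙_ C) ◁ S.τ A) ≫ (α_ (𝟙_ C) A S.L).inv ≫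
          ((α_ (𝟙_ C) A S.L).hom ≫ (λ_ (A ⊗ S.L)).hom) := by
    simp
  have h2 := e.symm.trans e'
  rwa [cancel_epi, cancel_epi, cancel_epi] at h2

lemma tau_one (A : C) :
    (S.one ▷ A) ≫ S.τ A = (λ_ A).hom ≫ (ρ_ A).inv ≫ (A ◁ S.one) := by
  rw [S.recover ((S.one ▷ A) ≫ S.τ A), S.tau_one_aux]
  monoidal
lemma incl_dcomp {A B D : C} (f : A ⟶ B) (ψ : B ⟶ D ⊗ S.L) :
    S.dcomp (S.incl f) ψ = f ≫ ψ := by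
  have : S.dcomp (S.incl f) ψ = f ≫ S.dcomp (S.did B) ψ := by
    simp [dcomp, incl, did]
  rw [this, S.id_dcomp]

lemma incl_id (A : C) : S.incl (𝟙 A) = S.did A := by simp [incl, did]

lemma incl_comp {A B D : C} (f : A ⟶ B) (g : B ⟶ D) :
    S.incl (f ≫ g) = S.dcomp (S.incl f) (S.incl g) := by
  rw [S.incl_dcomp]; simp [incl]

lemma comp_dtensor {A B A' B' X Y : C} (f : X ⟶ A) (g : Y ⟶ B)
    (φ : A ⟶ A' ⊗ S.L) (ψ : B ⟶ B' ⊗ S.L) :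
    S.dtensor (f ≫ φ) (g ≫ ψ) = (f ⊗ₘ g) ≫ S.dtensor φ ψ := by
  simp [dtensor, ← MonoidalCategory.tensorHom_comp_tensorHom_assoc]

lemma did_dtensor {A B B' : C} (ψ : B ⟶ B' ⊗ S.L) :
    S.dtensor (S.did A) ψ = (A ◁ ψ) ≫ (α_ A B' S.L).inv := by
  calc S.dtensor (S.did A) ψ
      = ((ρ_ A).inv ▷ B) ≫ (((A ⊗ 𝟙_ C : C)) ◁ ψ) ≫ ((A ◁ S.one) ▷ (B' ⊗ S.L)) ≫
          (α_ A S.L (B' ⊗ S.L)).hom ≫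
          (A ◁ ((α_ S.L B' S.L).inv ≫ ((S.τ B') ▷ S.L) ≫ (α_ B' S.L S.L).hom ≫
            (B' ◁ S.mul))) ≫ (α_ A B' S.L).inv := by
        rw [dtensor, did, MonoidalCategory.tensorHom_def]
        rw [comp_whiskerRight, Category.assoc, whisker_exchange_assoc]
        simp only [Category.assoc]
    _ = ((ρ_ A).inv ▷ B) ≫ (((A ⊗ 𝟙_ C : C)) ◁ ψ) ≫
          (α_ A (𝟙_ C) (B' ⊗ S.L)).hom ≫
          (A ◁ ((α_ (𝟙_ C) B' S.L).inv ≫ ((((S.one ▷ B') ≫ S.τ B') ▷ S.L)) ≫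
            (α_ B' S.L S.L).hom ≫ (B' ◁ S.mul))) ≫ (α_ A B' S.L).inv := by
        simp only [comp_whiskerRight, Category.assoc]
        congr 2
        monoidal
    _ = ((ρ_ A).inv ▷ B) ≫ (((A ⊗ 𝟙_ C : C)) ◁ ψ) ≫
          (α_ A (𝟙_ C) (B' ⊗ S.L)).hom ≫
          (A ◁ ((α_ (𝟙_ C) B' S.L).inv ≫
            ((((λ_ B').hom ≫ (ρ_ B').inv ≫ (B' ◁ S.one)) ▷ S.L)) ≫
            (α_ B' S.L S.L).hom ≫ (B' ◁ S.mul))) ≫ (α_ A B' S.L).inv := by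
        rw [S.tau_one]
    _ = ((ρ_ A).inv ▷ B) ≫ (((A ⊗ 𝟙_ C : C)) ◁ ψ) ≫
          (α_ A (𝟙_ C) (B' ⊗ S.L)).hom ≫
          (A ◁ ((α_ (𝟙_ C) B' S.L).inv ≫ ((λ_ B').hom ▷ S.L) ≫ ((ρ_ B').inv ▷ S.L) ≫
            (α_ B' (𝟙_ C) S.L).hom ≫ (B' ◁ ((S.one ▷ S.L) ≫ S.mul)))) ≫
          (α_ A B' S.L).inv := by
        congr 3
        monoidal
    _ = (A ◁ ψ) ≫ (α_ A B' S.L).inv := by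
        rw [S.one_mul]
        monoidal

lemma dtensor_did (A B : C) : S.dtensor (S.did A) (S.did B) = S.did (A ⊗ B) := by
  rw [S.did_dtensor, did, did]
  monoidal

lemma incl_tensor {A B A' B' : C} (f : A ⟶ A') (g : B ⟶ B') :
    S.incl (f ⊗ₘ g) = S.dtensor (S.incl f) (S.incl g) := by
  have h1 : S.incl f = f ≫ S.did A' := rfl
  have h2 : S.incl g = g ≫ S.did B' := rfl
  rw [h1, h2, S.comp_dtensor, S.dtensor_did]
  simp [incl, did]
lemma tau_via_p (B : C) :
    (S.L ◁ S.did B) ≫ (α_ S.L B S.L).inv ≫ ((S.τ B) ▷ S.L) ≫ (α_ B S.L S.L).hom ≫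
      (B ◁ S.mul) = S.τ B := by
  calc (S.L ◁ S.did B) ≫ (α_ S.L B S.L).inv ≫ ((S.τ B) ▷ S.L) ≫ (α_ B S.L S.L).hom ≫
        (B ◁ S.mul)
      = (S.L ◁ (ρ_ B).inv) ≫ (α_ S.L B (𝟙_ C)).inv ≫
          ((((S.L ⊗ B : C) ◁ S.one) ≫ (S.τ B ▷ S.L))) ≫ (α_ B S.L S.L).hom ≫
          (B ◁ S.mul) := by rw [did]; monoidal
    _ = (S.L ◁ (ρ_ B).inv) ≫ (α_ S.L B (𝟙_ C)).inv ≫ (S.τ B ▷ (𝟙_ C)) ≫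
          (((B ⊗ S.L : C) ◁ S.one) ≫ (α_ B S.L S.L).hom ≫ (B ◁ S.mul)) := by
        rw [whisker_exchange]; simp only [Category.assoc]
    _ = (S.L ◁ (ρ_ B).inv) ≫ (α_ S.L B (𝟙_ C)).inv ≫ (S.τ B ▷ (𝟙_ C)) ≫
          (α_ B S.L (𝟙_ C)).hom ≫ (B ◁ ((S.L ◁ S.one) ≫ S.mul)) := by monoidal
    _ = S.τ B := by rw [S.mul_one]; simp

lemma dtensor_did_right {A A' B : C} (φ : A ⟶ A' ⊗ S.L) :
    S.dtensor φ (S.did B)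
      = (φ ▷ B) ≫ (α_ A' S.L B).hom ≫ (A' ◁ S.τ B) ≫ (α_ A' B S.L).inv := by
  calc S.dtensor φ (S.did B)
      = (φ ▷ B) ≫ (((A' ⊗ S.L : C)) ◁ S.did B) ≫ (α_ A' S.L (B ⊗ S.L)).hom ≫
          (A' ◁ ((α_ S.L B S.L).inv ≫ ((S.τ B) ▷ S.L) ≫ (α_ B S.L S.L).hom ≫
            (B ◁ S.mul))) ≫ (α_ A' B S.L).inv := by
        rw [dtensor, MonoidalCategory.tensorHom_def]; simp only [Category.assoc]
    _ = (φ ▷ B) ≫ (α_ A' S.L B).hom ≫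
          (A' ◁ ((S.L ◁ S.did B) ≫ (α_ S.L B S.L).inv ≫ ((S.τ B) ▷ S.L) ≫
            (α_ B S.L S.L).hom ≫ (B ◁ S.mul))) ≫ (α_ A' B S.L).inv := by monoidal
    _ = _ := by rw [S.tau_via_p]

lemma p_natural {B B' : C} (ψ : B ⟶ B' ⊗ S.L) :
    (S.L ◁ ψ) ≫ (α_ S.L B' S.L).inv ≫ (S.τ B' ▷ S.L) ≫ (α_ B' S.L S.L).hom ≫
      (B' ◁ S.mul)
      = S.τ B ≫ (ψ ▷ S.L) ≫ (α_ B' S.L S.L).hom ≫ (B' ◁ S.mul) := by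
  calc (S.L ◁ ψ) ≫ (α_ S.L B' S.L).inv ≫ (S.τ B' ▷ S.L) ≫ (α_ B' S.L S.L).hom ≫
        (B' ◁ S.mul)
      = (S.L ◁ ψ) ≫ (α_ S.L B' S.L).inv ≫ (S.τ B' ▷ S.L) ≫ (α_ B' S.L S.L).hom ≫
          (B' ◁ (S.τ S.L ≫ S.mul)) := by rw [S.τ_comm]
    _ = (S.L ◁ ψ) ≫ S.τ (B' ⊗ S.L) ≫ (α_ B' S.L S.L).hom ≫ (B' ◁ S.mul) := by
        rw [S.τ_tensor]
        simp only [MonoidalCategory.whiskerLeft_comp, Category.assoc,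
          Iso.inv_hom_id_assoc]
    _ = S.τ B ≫ (ψ ▷ S.L) ≫ (α_ B' S.L S.L).hom ≫ (B' ◁ S.mul) := by
        rw [reassoc_of% (S.τ_natural ψ)]

lemma comp_dcomp {A A₀ B D : C} (w : A₀ ⟶ A) (x : A ⟶ B ⊗ S.L) (y : B ⟶ D ⊗ S.L) :
    S.dcomp (w ≫ x) y = w ≫ S.dcomp x y := by simp [dcomp]

lemma dcomp_whisker {A P Q D : C} (x : A ⟶ P ⊗ S.L) (w : P ⟶ Q) (y : Q ⟶ D ⊗ S.L) :
    S.dcomp (x ≫ (w ▷ S.L)) y = S.dcomp x (w ≫ y) := by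
  simp [dcomp]

lemma dcomp_whisker' {A B E E' : C} (x : A ⟶ B ⊗ S.L) (y : B ⟶ E ⊗ S.L) (w : E ⟶ E') :
    S.dcomp x (y ≫ (w ▷ S.L)) = S.dcomp x y ≫ (w ▷ S.L) := by
  simp only [dcomp, comp_whiskerRight, Category.assoc]
  rw [associator_naturality_left_assoc, whisker_exchange]

/-- `φ ⊗̄ ψ = (φ ⊗̄ 1) ∘̄ (1 ⊗̄ ψ)`. -/
lemma dtensor_factor {A B A' B' : C} (φ : A ⟶ A' ⊗ S.L) (ψ : B ⟶ B' ⊗ S.L) :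
    S.dtensor φ ψ = S.dcomp (S.dtensor φ (S.did B)) (S.dtensor (S.did A') ψ) := by
  rw [S.dtensor_did_right, S.did_dtensor, dcomp]
  calc S.dtensor φ ψ
      = (φ ▷ B) ≫ (((A' ⊗ S.L : C)) ◁ ψ) ≫ (α_ A' S.L (B' ⊗ S.L)).hom ≫
          (A' ◁ ((α_ S.L B' S.L).inv ≫ ((S.τ B') ▷ S.L) ≫ (α_ B' S.L S.L).hom ≫
            (B' ◁ S.mul))) ≫ (α_ A' B' S.L).inv := by
        rw [dtensor, MonoidalCategory.tensorHom_def]; simp only [Category.assoc]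
    _ = (φ ▷ B) ≫ (α_ A' S.L B).hom ≫
          (A' ◁ ((S.L ◁ ψ) ≫ (α_ S.L B' S.L).inv ≫ ((S.τ B') ▷ S.L) ≫
            (α_ B' S.L S.L).hom ≫ (B' ◁ S.mul))) ≫ (α_ A' B' S.L).inv := by monoidal
    _ = (φ ▷ B) ≫ (α_ A' S.L B).hom ≫
          (A' ◁ (S.τ B ≫ (ψ ▷ S.L) ≫ (α_ B' S.L S.L).hom ≫ (B' ◁ S.mul))) ≫
          (α_ A' B' S.L).inv := by rw [S.p_natural]
    _ = _ := by monoidal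

/-- interchange in the right slot for left-unital morphisms -/
lemma did_dtensor_dcomp {A B B' B'' : C} (ψ : B ⟶ B' ⊗ S.L) (ψ' : B' ⟶ B'' ⊗ S.L) :
    S.dtensor (S.did A) (S.dcomp ψ ψ')
      = S.dcomp (S.dtensor (S.did A) ψ) (S.dtensor (S.did A) ψ') := by
  rw [S.did_dtensor, S.did_dtensor, S.did_dtensor, dcomp, dcomp]
  monoidal

/-- interchange in the left slot for right-unital morphisms -/
lemma dtensor_did_dcomp {A A' A'' B : C} (φ : A ⟶ A' ⊗ S.L) (φ' : A' ⟶ A'' ⊗ S.L) :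
    S.dtensor (S.dcomp φ φ') (S.did B)
      = S.dcomp (S.dtensor φ (S.did B)) (S.dtensor φ' (S.did B)) := by
  have G3i : (α_ S.L S.L B).inv ≫ (S.mul ▷ B) ≫ S.τ B
      = (S.L ◁ S.τ B) ≫ (α_ S.L B S.L).inv ≫ (S.τ B ▷ S.L) ≫ (α_ B S.L S.L).hom ≫
        (B ◁ S.mul) := by
    rw [S.τ_mul]; simp
  calc S.dtensor (S.dcomp φ φ') (S.did B)
      = ((φ ≫ (φ' ▷ S.L) ≫ (α_ A'' S.L S.L).hom ≫ (A'' ◁ S.mul)) ▷ B) ≫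
          (α_ A'' S.L B).hom ≫ (A'' ◁ S.τ B) ≫ (α_ A'' B S.L).inv := by
        rw [S.dtensor_did_right, dcomp]
    _ = (φ ▷ B) ≫ (α_ A' S.L B).hom ≫ (φ' ▷ (S.L ⊗ B)) ≫
          (α_ A'' S.L (S.L ⊗ B)).hom ≫
          (A'' ◁ ((α_ S.L S.L B).inv ≫ (S.mul ▷ B) ≫ S.τ B)) ≫
          (α_ A'' B S.L).inv := by monoidal
    _ = (φ ▷ B) ≫ (α_ A' S.L B).hom ≫ (φ' ▷ (S.L ⊗ B)) ≫
          (α_ A'' S.L (S.L ⊗ B)).hom ≫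
          (A'' ◁ ((S.L ◁ S.τ B) ≫ (α_ S.L B S.L).inv ≫ (S.τ B ▷ S.L) ≫
            (α_ B S.L S.L).hom ≫ (B ◁ S.mul))) ≫ (α_ A'' B S.L).inv := by rw [G3i]
    _ = (φ ▷ B) ≫ (α_ A' S.L B).hom ≫
          ((A' ◁ S.τ B) ≫ (φ' ▷ (B ⊗ S.L))) ≫ (α_ A'' S.L (B ⊗ S.L)).hom ≫
          (A'' ◁ ((α_ S.L B S.L).inv ≫ (S.τ B ▷ S.L) ≫ (α_ B S.L S.L).hom ≫
            (B ◁ S.mul))) ≫ (α_ A'' B S.L).inv := by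
        rw [whisker_exchange]; monoidal
    _ = _ := by rw [S.dtensor_did_right, S.dtensor_did_right, dcomp]; monoidal

/-- left-unital and right-unital morphisms commute -/
lemma did_swap {A' A'' B B' : C} (φ' : A' ⟶ A'' ⊗ S.L) (ψ : B ⟶ B' ⊗ S.L) :
    S.dcomp (S.dtensor (S.did A') ψ) (S.dtensor φ' (S.did B'))
      = S.dcomp (S.dtensor φ' (S.did B)) (S.dtensor (S.did A'') ψ) := by
  rw [S.did_dtensor, S.did_dtensor, S.dtensor_did_right, S.dtensor_did_right, dcomp, dcomp]
  calc ((A' ◁ ψ) ≫ (α_ A' B' S.L).inv) ≫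
        (((φ' ▷ B') ≫ (α_ A'' S.L B').hom ≫ (A'' ◁ S.τ B') ≫ (α_ A'' B' S.L).inv) ▷ S.L) ≫
        (α_ (A'' ⊗ B') S.L S.L).hom ≫ ((A'' ⊗ B' : C) ◁ S.mul)
      = ((A' ◁ ψ) ≫ (φ' ▷ (B' ⊗ S.L))) ≫ (α_ A'' S.L (B' ⊗ S.L)).hom ≫
          (A'' ◁ ((α_ S.L B' S.L).inv ≫ (S.τ B' ▷ S.L) ≫ (α_ B' S.L S.L).hom ≫
            (B' ◁ S.mul))) ≫ (α_ A'' B' S.L).inv := by monoidal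
    _ = (φ' ▷ B) ≫ (((A'' ⊗ S.L : C) ◁ ψ)) ≫ (α_ A'' S.L (B' ⊗ S.L)).hom ≫
          (A'' ◁ ((α_ S.L B' S.L).inv ≫ (S.τ B' ▷ S.L) ≫ (α_ B' S.L S.L).hom ≫
            (B' ◁ S.mul))) ≫ (α_ A'' B' S.L).inv := by
        rw [whisker_exchange]; simp only [Category.assoc]
    _ = (φ' ▷ B) ≫ (α_ A'' S.L B).hom ≫
          (A'' ◁ ((S.L ◁ ψ) ≫ (α_ S.L B' S.L).inv ≫ (S.τ B' ▷ S.L) ≫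
            (α_ B' S.L S.L).hom ≫ (B' ◁ S.mul))) ≫ (α_ A'' B' S.L).inv := by monoidal
    _ = (φ' ▷ B) ≫ (α_ A'' S.L B).hom ≫
          (A'' ◁ (S.τ B ≫ (ψ ▷ S.L) ≫ (α_ B' S.L S.L).hom ≫ (B' ◁ S.mul))) ≫
          (α_ A'' B' S.L).inv := by rw [S.p_natural]
    _ = _ := by monoidal

lemma dtensor_interchange {A B A' B' A'' B'' : C} (φ : A ⟶ A' ⊗ S.L) (ψ : B ⟶ B' ⊗ S.L)
    (φ' : A' ⟶ A'' ⊗ S.L) (ψ' : B' ⟶ B'' ⊗ S.L) :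
    S.dcomp (S.dtensor φ ψ) (S.dtensor φ' ψ')
      = S.dtensor (S.dcomp φ φ') (S.dcomp ψ ψ') := by
  calc S.dcomp (S.dtensor φ ψ) (S.dtensor φ' ψ')
      = S.dcomp (S.dcomp (S.dtensor φ (S.did B)) (S.dtensor (S.did A') ψ))
          (S.dcomp (S.dtensor φ' (S.did B')) (S.dtensor (S.did A'') ψ')) := by
        rw [← S.dtensor_factor, ← S.dtensor_factor]
    _ = S.dcomp (S.dtensor φ (S.did B))
          (S.dcomp (S.dcomp (S.dtensor (S.did A') ψ) (S.dtensor φ' (S.did B')))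
            (S.dtensor (S.did A'') ψ')) := by
        rw [S.dcomp_assoc, S.dcomp_assoc]
    _ = S.dcomp (S.dtensor φ (S.did B))
          (S.dcomp (S.dcomp (S.dtensor φ' (S.did B)) (S.dtensor (S.did A'') ψ))
            (S.dtensor (S.did A'') ψ')) := by rw [S.did_swap]
    _ = S.dcomp (S.dcomp (S.dtensor φ (S.did B)) (S.dtensor φ' (S.did B)))
          (S.dcomp (S.dtensor (S.did A'') ψ) (S.dtensor (S.did A'') ψ')) := by
        rw [S.dcomp_assoc, S.dcomp_assoc]
    _ = S.dtensor (S.dcomp φ φ') (S.dcomp ψ ψ') := by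
        rw [← S.dtensor_did_dcomp, ← S.did_dtensor_dcomp, ← S.dtensor_factor]

lemma assoc_E1 {A B D A' : C} (φ : A ⟶ A' ⊗ S.L) :
    (α_ A B D).inv ≫ S.dtensor (S.dtensor φ (S.did B)) (S.did D)
      = S.dtensor φ (S.did (B ⊗ D)) ≫ ((α_ A' B D).inv ▷ S.L) := by
  rw [S.dtensor_did_right, S.dtensor_did_right, S.dtensor_did_right, S.τ_tensor]
  monoidal

lemma assoc_E2 {A' B B' D : C} (ψ : B ⟶ B' ⊗ S.L) :
    (α_ A' B D).inv ≫ S.dtensor (S.dtensor (S.did A') ψ) (S.did D)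
      = S.dtensor (S.did A') (S.dtensor ψ (S.did D)) ≫ ((α_ A' B' D).inv ▷ S.L) := by
  rw [S.did_dtensor, S.dtensor_did_right, S.dtensor_did_right, S.did_dtensor]
  monoidal

lemma assoc_E3 {A' B' D D' : C} (χ : D ⟶ D' ⊗ S.L) :
    (α_ A' B' D).inv ≫ S.dtensor (S.did (A' ⊗ B')) χ ≫ ((α_ A' B' D').hom ▷ S.L)
      = S.dtensor (S.did A') (S.dtensor (S.did B') χ) := by
  rw [S.did_dtensor, S.did_dtensor, S.did_dtensor]
  monoidal

lemma dtensor_assoc {A B D A' B' D' : C} (φ : A ⟶ A' ⊗ S.L) (ψ : B ⟶ B' ⊗ S.L)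
    (χ : D ⟶ D' ⊗ S.L) :
    (α_ A B D).inv ≫ S.dtensor (S.dtensor φ ψ) χ ≫ ((α_ A' B' D').hom ▷ S.L)
      = S.dtensor φ (S.dtensor ψ χ) := by
  calc (α_ A B D).inv ≫ S.dtensor (S.dtensor φ ψ) χ ≫ ((α_ A' B' D').hom ▷ S.L)
      = (α_ A B D).inv ≫
          S.dcomp (S.dcomp (S.dtensor (S.dtensor φ (S.did B)) (S.did D))
              (S.dtensor (S.dtensor (S.did A') ψ) (S.did D)))
            (S.dtensor (S.did (A' ⊗ B')) χ) ≫ ((α_ A' B' D').hom ▷ S.L) := by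
        rw [S.dtensor_factor (S.dtensor φ ψ) χ, S.dtensor_factor φ ψ,
          S.dtensor_did_dcomp]
    _ = S.dcomp (S.dcomp ((α_ A B D).inv ≫ S.dtensor (S.dtensor φ (S.did B)) (S.did D))
          (S.dtensor (S.dtensor (S.did A') ψ) (S.did D)))
          (S.dtensor (S.did (A' ⊗ B')) χ ≫ ((α_ A' B' D').hom ▷ S.L)) := by
        rw [S.dcomp_whisker', S.comp_dcomp, S.comp_dcomp]; simp only [Category.assoc]
    _ = S.dcomp (S.dcomp (S.dtensor φ (S.did (B ⊗ D)))
          ((α_ A' B D).inv ≫ S.dtensor (S.dtensor (S.did A') ψ) (S.did D)))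
          (S.dtensor (S.did (A' ⊗ B')) χ ≫ ((α_ A' B' D').hom ▷ S.L)) := by
        rw [S.assoc_E1, S.dcomp_whisker]
    _ = S.dcomp (S.dcomp (S.dtensor φ (S.did (B ⊗ D)))
          (S.dtensor (S.did A') (S.dtensor ψ (S.did D))))
          ((α_ A' B' D).inv ≫ S.dtensor (S.did (A' ⊗ B')) χ ≫ ((α_ A' B' D').hom ▷ S.L)) := by
        rw [S.assoc_E2, S.dcomp_whisker' (S.dtensor φ (S.did (B ⊗ D)))
          (S.dtensor (S.did A') (S.dtensor ψ (S.did D))) (α_ A' B' D).inv,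
          S.dcomp_whisker]
    _ = S.dcomp (S.dcomp (S.dtensor φ (S.did (B ⊗ D)))
          (S.dtensor (S.did A') (S.dtensor ψ (S.did D))))
          (S.dtensor (S.did A') (S.dtensor (S.did B') χ)) := by rw [S.assoc_E3]
    _ = S.dcomp (S.dtensor φ (S.did (B ⊗ D)))
          (S.dcomp (S.dtensor (S.did A') (S.dtensor ψ (S.did D)))
            (S.dtensor (S.did A') (S.dtensor (S.did B') χ))) := by rw [S.dcomp_assoc]
    _ = S.dcomp (S.dtensor φ (S.did (B ⊗ D)))
          (S.dtensor (S.did A') (S.dcomp (S.dtensor ψ (S.did D))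
            (S.dtensor (S.did B') χ))) := by rw [S.did_dtensor_dcomp]
    _ = S.dtensor φ (S.dtensor ψ χ) := by
        rw [← S.dtensor_factor ψ χ, ← S.dtensor_factor φ (S.dtensor ψ χ)]

end BaseAlgebraIn

theorem statement4 (S : BaseAlgebraIn C) :
    -- `Ō_L` is a category: composition is unital and associative
    (∀ {A B : C} (φ : A ⟶ B ⊗ S.L), S.dcomp (S.did A) φ = φ ∧ S.dcomp φ (S.did B) = φ) ∧
    (∀ {A B D E : C} (φ : A ⟶ B ⊗ S.L) (ψ : B ⟶ D ⊗ S.L) (χ : D ⟶ E ⊗ S.L),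
      S.dcomp (S.dcomp φ ψ) χ = S.dcomp φ (S.dcomp ψ χ)) ∧
    -- the tensor product is unital and functorial (interchange law)
    (∀ A B : C, S.dtensor (S.did A) (S.did B) = S.did (A ⊗ B)) ∧
    (∀ {A B A' B' A'' B'' : C} (φ : A ⟶ A' ⊗ S.L) (ψ : B ⟶ B' ⊗ S.L)
      (φ' : A' ⟶ A'' ⊗ S.L) (ψ' : B' ⟶ B'' ⊗ S.L),
      S.dcomp (S.dtensor φ ψ) (S.dtensor φ' ψ')
        = S.dtensor (S.dcomp φ φ') (S.dcomp ψ ψ')) ∧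
    -- the tensor product is associative (up to the associator of `O`)
    (∀ {A B D A' B' D' : C} (φ : A ⟶ A' ⊗ S.L) (ψ : B ⟶ B' ⊗ S.L) (χ : D ⟶ D' ⊗ S.L),
      (α_ A B D).inv ≫ S.dtensor (S.dtensor φ ψ) χ ≫ ((α_ A' B' D').hom ▷ S.L)
        = S.dtensor φ (S.dtensor ψ χ)) ∧
    -- `O` is a monoidal subcategory of `Ō_L`:
    (∀ A : C, S.incl (𝟙 A) = S.did A) ∧
    (∀ {A B D : C} (f : A ⟶ B) (g : B ⟶ D), S.incl (f ≫ g) = S.dcomp (S.incl f) (S.incl g)) ∧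
    (∀ {A B A' B' : C} (f : A ⟶ A') (g : B ⟶ B'),
      S.incl (f ⊗ₘ g) = S.dtensor (S.incl f) (S.incl g)) := by
  refine ⟨fun φ => ⟨S.id_dcomp φ, S.dcomp_id φ⟩, fun φ ψ χ => S.dcomp_assoc φ ψ χ,
    S.dtensor_did, fun φ ψ φ' ψ' => S.dtensor_interchange φ ψ φ' ψ',
    fun φ ψ χ => S.dtensor_assoc φ ψ χ, S.incl_id, fun f g => S.incl_comp f g,
    fun f g => S.incl_tensor f g⟩
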